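/- Under assumption (H1), the taming error is of order h^δ with polynomially growing coefficient: for every real p ≥ 2 there exists a constant ᾱ₂, depending only on α₂, |f(0,0)|, p and r, such that for all x, y ∈ ℝ^a, |f(x,y) − f_h(x,y)|^p ≤ ᾱ₂ h^{δp} (1 + |x|^{2(r+1)p} + |y|^{2(r+1)p}). -/

import Mathlib

open RealInnerProductSpace

/-- Under assumption (H1), the taming error is of order `h^δ` with a
polynomially growing coefficient: for every `p ≥ 2` there is a constant `ᾱ₂`, depending only
on `α₂`, `|f(0,0)|`, `p` and `r` (in particular not on `h`, `δ`, `x`, `y`), such that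
`|f(x,y) − f_h(x,y)|^p ≤ ᾱ₂ h^{δp} (1 + |x|^{2(r+1)p} + |y|^{2(r+1)p})`. -/
theorem stmt15 {a d : ℕ} (ha : 1 ≤ a) (hd : 1 ≤ d)
    (f : EuclideanSpace ℝ (Fin a) → EuclideanSpace ℝ (Fin a) → EuclideanSpace ℝ (Fin a))
    (g : EuclideanSpace ℝ (Fin a) → EuclideanSpace ℝ (Fin a) →
      EuclideanSpace ℝ (Fin a × Fin d))
    (α₁ α₂ p r ε : ℝ) (hα₁ : 1 < α₁) (hα₂ : 1 < α₂) (hp : 2 ≤ p) (hr : 1 ≤ r)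
    (hε : ε ∈ Set.Ioo (0:ℝ) 1)
    (hH1a : ∀ x y x' y' : EuclideanSpace ℝ (Fin a),
      2 * ⟪x - x', f x y - f x' y'⟫ + (p - 1) * ε ^ 2 * ‖g x y - g x' y'‖ ^ 2 ≤
        α₁ * (‖x - x'‖ ^ 2 + ‖y - y'‖ ^ 2))
    (hH1b : ∀ x y x' y' : EuclideanSpace ℝ (Fin a),
      ‖f x y - f x' y'‖ ≤
        α₂ * (1 + ‖x‖ ^ r + ‖x'‖ ^ r + ‖y‖ ^ r + ‖y'‖ ^ r) * (‖x - x'‖ + ‖y - y'‖)) :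
    ∃ αBar₂ : ℝ, ∀ h δ : ℝ, h ∈ Set.Ioo (0:ℝ) 1 → δ ∈ Set.Ioc (0:ℝ) (1/2) →
      ∀ (fh : EuclideanSpace ℝ (Fin a) → EuclideanSpace ℝ (Fin a) →
          EuclideanSpace ℝ (Fin a)),
        (∀ x y, fh x y = (1 + h ^ δ * ‖f x y‖)⁻¹ • f x y) →
        ∀ x y : EuclideanSpace ℝ (Fin a),
          ‖f x y - fh x y‖ ^ p ≤
            αBar₂ * h ^ (δ * p) *
              (1 + ‖x‖ ^ (2 * (r + 1) * p) + ‖y‖ ^ (2 * (r + 1) * p)) := by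
  set F₀ : ℝ := ‖f 0 0‖ with hF₀
  set M : ℝ := 6 * α₂ + F₀ with hMdef
  have hF₀0 : 0 ≤ F₀ := norm_nonneg _
  have hM1 : (1:ℝ) ≤ M := by nlinarith
  have hM0 : (0:ℝ) ≤ M := by linarith
  refine ⟨(M * M) ^ p, ?_⟩
  rintro h δ ⟨h0, h1⟩ ⟨hδ0, hδ1⟩ fh hfh x y
  set X : ℝ := ‖x‖ with hX
  set Y : ℝ := ‖y‖ with hY
  set F : ℝ := ‖f x y‖ with hF
  have hX0 : 0 ≤ X := norm_nonneg _
  have hY0 : 0 ≤ Y := norm_nonneg _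
  have hF0 : 0 ≤ F := norm_nonneg _
  set W : ℝ := max 1 (max X Y) with hWdef
  have hW1 : (1:ℝ) ≤ W := le_max_left _ _
  have hW0 : (0:ℝ) < W := lt_of_lt_of_le one_pos hW1
  have hXW : X ≤ W := le_trans (le_max_left X Y) (le_max_right _ _)
  have hYW : Y ≤ W := le_trans (le_max_right X Y) (le_max_right _ _)
  have hr0 : (0:ℝ) < r := by linarith
  have hp0 : (0:ℝ) < p := by linarith
  -- step 1: bound F by M * W ^ (r+1)
  have hb := hH1b x y 0 0
  simp only [norm_zero, sub_zero, Real.zero_rpow (ne_of_gt hr0), add_zero] at hb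
  have hWr1 : W ^ r * W = W ^ (r + 1) := by
    rw [Real.rpow_add_one (ne_of_gt hW0)]
  have hWrpos : (1:ℝ) ≤ W ^ (r + 1) := Real.one_le_rpow hW1 (by linarith)
  have hXr : X ^ r ≤ W ^ r := Real.rpow_le_rpow hX0 hXW (le_of_lt hr0)
  have hYr : Y ^ r ≤ W ^ r := Real.rpow_le_rpow hY0 hYW (le_of_lt hr0)
  have hWr1' : (1:ℝ) ≤ W ^ r := Real.one_le_rpow hW1 (le_of_lt hr0)
  have hFb : F ≤ M * W ^ (r + 1) := by
    have hFle : F ≤ ‖f x y - f 0 0‖ + F₀ := by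
      calc F = ‖(f x y - f 0 0) + f 0 0‖ := by rw [sub_add_cancel]
        _ ≤ ‖f x y - f 0 0‖ + F₀ := norm_add_le _ _
    have h2 : α₂ * (1 + X ^ r + Y ^ r) * (X + Y) ≤ α₂ * (3 * W ^ r) * (2 * W) := by
      have hα₂0 : (0:ℝ) ≤ α₂ := by linarith
      have e1 : 1 + X ^ r + Y ^ r ≤ 3 * W ^ r := by linarith
      have e2 : X + Y ≤ 2 * W := by linarith
      have e3 : 0 ≤ 1 + X ^ r + Y ^ r := by positivity
      have e4 : 0 ≤ X + Y := by linarith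
      apply mul_le_mul (mul_le_mul le_rfl e1 e3 hα₂0) e2 e4 (by positivity)
    have h3 : α₂ * (3 * W ^ r) * (2 * W) = 6 * α₂ * W ^ (r + 1) := by
      rw [← hWr1]; ring
    have h4 : F₀ ≤ F₀ * W ^ (r + 1) := le_mul_of_one_le_right hF₀0 hWrpos
    calc F ≤ α₂ * (1 + X ^ r + Y ^ r) * (X + Y) + F₀ := by linarith [hFle, hb]
      _ ≤ 6 * α₂ * W ^ (r + 1) + F₀ * W ^ (r + 1) := by linarith [h2, h3.le, h3.ge, h4]
      _ = M * W ^ (r + 1) := by rw [hMdef]; ring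
  -- step 2: taming error pointwise
  have hhδ : (0:ℝ) < h ^ δ := Real.rpow_pos_of_pos h0 δ
  set t : ℝ := h ^ δ * F with htdef
  have ht0 : 0 ≤ t := by positivity
  have h1t : (0:ℝ) < 1 + t := by linarith
  have hsub : f x y - fh x y = (1 - (1 + t)⁻¹) • f x y := by
    rw [hfh, sub_smul, one_smul]
  have hcoef0 : 0 ≤ 1 - (1 + t)⁻¹ := by
    have : (1 + t)⁻¹ ≤ 1 := by
      rw [inv_le_one_iff₀]; right; linarith
    linarith
  have hcoef : 1 - (1 + t)⁻¹ ≤ t := by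
    have h' : 1 - (1 + t)⁻¹ = t / (1 + t) := by field_simp; ring
    rw [h']
    exact div_le_self ht0 (by linarith)
  have herr : ‖f x y - fh x y‖ ≤ h ^ δ * (F * F) := by
    rw [hsub, norm_smul, Real.norm_eq_abs, abs_of_nonneg hcoef0]
    calc (1 - (1 + t)⁻¹) * F ≤ t * F := mul_le_mul_of_nonneg_right hcoef hF0
      _ = h ^ δ * (F * F) := by rw [htdef]; ring
  -- step 3: raise to power p
  have hrp : ‖f x y - fh x y‖ ^ p ≤ (h ^ δ * (F * F)) ^ p :=
    Real.rpow_le_rpow (norm_nonneg _) herr (le_of_lt hp0)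
  have hsplit : (h ^ δ * (F * F)) ^ p = h ^ (δ * p) * (F * F) ^ p := by
    rw [Real.mul_rpow (le_of_lt hhδ) (by positivity), ← Real.rpow_mul (le_of_lt h0)]
  have hFF : F * F ≤ (M * M) * W ^ (2 * (r + 1)) := by
    have : W ^ (r + 1) * W ^ (r + 1) = W ^ (2 * (r + 1)) := by
      rw [← Real.rpow_add hW0]; ring_nf
    calc F * F ≤ (M * W ^ (r + 1)) * (M * W ^ (r + 1)) :=
          mul_le_mul hFb hFb hF0 (by positivity)
      _ = (M * M) * W ^ (2 * (r + 1)) := by rw [← this]; ring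
  have hFFp : (F * F) ^ p ≤ (M * M) ^ p * W ^ (2 * (r + 1) * p) := by
    calc (F * F) ^ p ≤ ((M * M) * W ^ (2 * (r + 1))) ^ p :=
          Real.rpow_le_rpow (by positivity) hFF (le_of_lt hp0)
      _ = (M * M) ^ p * W ^ (2 * (r + 1) * p) := by
          rw [Real.mul_rpow (by positivity) (by positivity),
            ← Real.rpow_mul (le_of_lt hW0)]
  -- step 4: bound W power by sum
  set e : ℝ := 2 * (r + 1) * p with hedef
  have hWsum : W ^ e ≤ 1 + X ^ e + Y ^ e := by
    have hXe : 0 ≤ X ^ e := Real.rpow_nonneg hX0 e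
    have hYe : 0 ≤ Y ^ e := Real.rpow_nonneg hY0 e
    rcases max_choice 1 (max X Y) with hc | hc
    · rw [hWdef, hc, Real.one_rpow]; linarith
    · rcases max_choice X Y with hc' | hc'
      · rw [hWdef, hc, hc']; linarith
      · rw [hWdef, hc, hc']; linarith
  -- combine
  have hhδp : 0 ≤ h ^ (δ * p) := (Real.rpow_pos_of_pos h0 _).le
  have hMMp : 0 ≤ (M * M) ^ p := Real.rpow_nonneg (by positivity) p
  calc ‖f x y - fh x y‖ ^ p ≤ h ^ (δ * p) * (F * F) ^ p := by rw [← hsplit]; exact hrp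
    _ ≤ h ^ (δ * p) * ((M * M) ^ p * W ^ e) := by
        exact mul_le_mul_of_nonneg_left hFFp hhδp
    _ ≤ h ^ (δ * p) * ((M * M) ^ p * (1 + X ^ e + Y ^ e)) := by
        exact mul_le_mul_of_nonneg_left (mul_le_mul_of_nonneg_left hWsum hMMp) hhδp
    _ = (M * M) ^ p * h ^ (δ * p) * (1 + X ^ e + Y ^ e) := by ring
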